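/- If a, m, t, r are positive integers such that m * t^(r^2) ≤ a^r, then the number of divisors of m lying in the interval (a, a+t] is strictly less than r. -/

import Mathlib

open Finset

lemma gcd_finset_lcm_dvd_prod_gcd (x : ℕ) (S : Finset ℕ) :
    Nat.gcd x (S.lcm id) ∣ ∏ d ∈ S, Nat.gcd x d := by
  induction S using Finset.induction_on with
  | empty => simp
  | insert _ _ hb ih =>
    rename_i b S
    rw [Finset.lcm_insert, Finset.prod_insert hb]
    have h1 : Nat.gcd x (Nat.lcm b (S.lcm id)) ∣ Nat.gcd x b * Nat.gcd x (S.lcm id) := by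
      refine dvd_trans ?_ (Nat.gcd_mul_right_dvd_mul_gcd x b (S.lcm id))
      exact Nat.gcd_dvd_gcd_of_dvd_right x (Nat.lcm_dvd_mul b (S.lcm id))
    exact h1.trans (mul_dvd_mul_left _ ih)

lemma prod_le_lcm_mul_pow (t : ℕ) (T : Finset ℕ)
    (hpos : ∀ d ∈ T, 0 < d)
    (hgcd : ∀ d ∈ T, ∀ e ∈ T, d ≠ e → Nat.gcd d e ≤ t) :
    ∏ d ∈ T, d ≤ T.lcm id * t ^ (T.card.choose 2) := by
  induction T using Finset.induction_on with
  | empty => simp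
  | insert _ _ hb ih =>
    rename_i x T
    have hx : 0 < x := hpos x (mem_insert_self x T)
    have hposT : ∀ d ∈ T, 0 < d := fun d hd => hpos d (mem_insert_of_mem hd)
    have hgcdT : ∀ d ∈ T, ∀ e ∈ T, d ≠ e → Nat.gcd d e ≤ t := fun d hd e he =>
      hgcd d (mem_insert_of_mem hd) e (mem_insert_of_mem he)
    have ihT := ih hposT hgcdT
    -- gcd x (lcm T) ≤ t ^ T.card
    have hgle : Nat.gcd x (T.lcm id) ≤ t ^ T.card := by
      have hdvd := gcd_finset_lcm_dvd_prod_gcd x T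
      have hprodpos : 0 < ∏ d ∈ T, Nat.gcd x d :=
        Finset.prod_pos fun d hd => Nat.gcd_pos_of_pos_left d hx
      refine le_trans (Nat.le_of_dvd hprodpos hdvd) ?_
      refine Finset.prod_le_pow_card T _ t fun d hd => ?_
      exact hgcd x (mem_insert_self x T) d (mem_insert_of_mem hd)
        (fun h => hb (h ▸ hd))
    have key : x * T.lcm id =
        Nat.gcd x (T.lcm id) * ((insert x T).lcm id) := by
      rw [Finset.lcm_insert]
      have : lcm (id x) (T.lcm id) = Nat.lcm x (T.lcm id) := rfl
      rw [this]
      exact (Nat.gcd_mul_lcm x (T.lcm id)).symm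
    rw [Finset.prod_insert hb, Finset.card_insert_of_notMem hb]
    calc x * ∏ d ∈ T, d ≤ x * (T.lcm id * t ^ (T.card.choose 2)) :=
          Nat.mul_le_mul_left x ihT
      _ = (x * T.lcm id) * t ^ (T.card.choose 2) := by ring
      _ = Nat.gcd x (T.lcm id) * ((insert x T).lcm id) * t ^ (T.card.choose 2) := by
          rw [key]
      _ ≤ t ^ T.card * ((insert x T).lcm id) * t ^ (T.card.choose 2) := by
          exact Nat.mul_le_mul_right _ (Nat.mul_le_mul_right _ hgle)
      _ = (insert x T).lcm id * t ^ ((T.card + 1).choose 2) := by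
          rw [Nat.choose_succ_succ' T.card 1, Nat.choose_one_right, pow_add]
          ring

theorem divisors_in_short_interval_lt (a m t r : ℕ) (ha : 0 < a) (hm : 0 < m)
    (ht : 0 < t) (hr : 0 < r) (h : m * t ^ (r ^ 2) ≤ a ^ r) :
    ((m.divisors.filter (fun d => a < d ∧ d ≤ a + t)).card) < r := by
  by_contra hcon
  push_neg at hcon
  obtain ⟨T, hTsub, hTcard⟩ := Finset.exists_subset_card_eq hcon
  have hTmem : ∀ d ∈ T, d ∣ m ∧ a < d ∧ d ≤ a + t := by
    intro d hd
    have := hTsub hd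
    simp only [Finset.mem_filter, Nat.mem_divisors] at this
    exact ⟨this.1.1, this.2⟩
  have hpos : ∀ d ∈ T, 0 < d := fun d hd => lt_trans ha (hTmem d hd).2.1
  have hgcd : ∀ d ∈ T, ∀ e ∈ T, d ≠ e → Nat.gcd d e ≤ t := by
    intro d hd e he hne
    rcases lt_or_gt_of_ne hne with hlt | hlt
    · have hdvd : Nat.gcd d e ∣ e - d := Nat.dvd_sub (Nat.gcd_dvd_right d e) (Nat.gcd_dvd_left d e)
      have : Nat.gcd d e ≤ e - d := Nat.le_of_dvd (by omega) hdvd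
      have h1 := (hTmem d hd).2.1
      have h2 := (hTmem e he).2.2
      omega
    · have hdvd : Nat.gcd d e ∣ d - e := Nat.dvd_sub (Nat.gcd_dvd_left d e) (Nat.gcd_dvd_right d e)
      have : Nat.gcd d e ≤ d - e := Nat.le_of_dvd (by omega) hdvd
      have h1 := (hTmem e he).2.1
      have h2 := (hTmem d hd).2.2
      omega
  have hlcm_dvd : T.lcm id ∣ m := Finset.lcm_dvd fun d hd => (hTmem d hd).1
  have hlcm_le : T.lcm id ≤ m := Nat.le_of_dvd hm hlcm_dvd
  have hbound := prod_le_lcm_mul_pow t T hpos hgcd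
  have hlow : a ^ r < ∏ d ∈ T, d := by
    calc a ^ r < (a + 1) ^ r := Nat.pow_lt_pow_left (by omega) hr.ne'
      _ ≤ ∏ d ∈ T, d := by
          rw [← hTcard]
          exact Finset.pow_card_le_prod T _ _ fun d hd => (hTmem d hd).2.1
  have hchoose : r.choose 2 ≤ r ^ 2 := by
    calc r.choose 2 ≤ r * (r - 1) := by
          rw [Nat.choose_two_right]; exact Nat.div_le_self _ _
      _ ≤ r * r := Nat.mul_le_mul_left r (Nat.sub_le r 1)
      _ = r ^ 2 := (sq r).symm
  have : a ^ r < a ^ r := by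
    calc a ^ r < ∏ d ∈ T, d := hlow
      _ ≤ T.lcm id * t ^ (T.card.choose 2) := hbound
      _ ≤ m * t ^ (r.choose 2) := by
          rw [hTcard]; exact Nat.mul_le_mul_right _ hlcm_le
      _ ≤ m * t ^ (r ^ 2) := Nat.mul_le_mul_left m (Nat.pow_le_pow_right ht hchoose)
      _ ≤ a ^ r := h
  exact lt_irrefl _ this
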